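/- The sequence d_n := c_n / 2^n converges to a limit α as n → ∞; this limit α is strictly positive, and there is a constant K > 0 such that |d_n − α| ≤ K · 2^{−n/2} for all n ≥ 5. -/

import Mathlib

/-- The Conway number (correlation) `C(A,B)` of two head/tail strings of length `n`,
encoded as functions `Fin n → Bool` (with `H = true`, `T = false`, and 0-indexed
positions): `C(A,B) = ∑_{i=1}^n δ_i 2^{n-i}` where `δ_i = 1` iff `a_{i+j} = b_{1+j}`
for all `j = 0,…,n-i`. -/
def conway {n : ℕ} (A B : Fin n → Bool) : ℕ :=
  ∑ i : Fin n,
    if (∀ j : Fin n, (i : ℕ) + (j : ℕ) < n → A (i + j) = B j) then 2 ^ (n - 1 - (i : ℕ)) else 0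

/-- `cstar m` is the number of head/tail strings of length `m` beginning with `HT`,
ending with `TH`, whose autocorrelation is `2^{m-1} + 1`. -/
def cstar (m : ℕ) : ℕ :=
  Fintype.card {A : Fin m → Bool //
    (∀ i : Fin m, (i : ℕ) = 0 → A i = true) ∧
    (∀ i : Fin m, (i : ℕ) = 1 → A i = false) ∧
    (∀ i : Fin m, (i : ℕ) = m - 2 → A i = false) ∧
    (∀ i : Fin m, (i : ℕ) = m - 1 → A i = true) ∧
    conway A A = 2 ^ (m - 1) + 1}

/-- `c n = 2 * cstar (n-1)`: by Csirik's characterization, the number of optimal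
strategies for Player I in the Penney-Ante game with strings of length `n`. -/
def c (n : ℕ) : ℕ := 2 * cstar (n - 1)

namespace DnAux

open Finset

def ext {m : ℕ} (A : Fin m → Bool) (i : ℕ) : Bool :=
  if h : i < m then A ⟨i, h⟩ else false

def Bif {m : ℕ} (A : Fin m → Bool) (k : ℕ) : Prop :=
  ∀ j < k, ext A (m - k + j) = ext A j

instance {m : ℕ} (A : Fin m → Bool) (k : ℕ) : Decidable (Bif A k) := by
  unfold Bif; infer_instance

def Pred (m M : ℕ) (A : Fin m → Bool) : Prop :=
  ext A 0 = true ∧ ext A 1 = false ∧ ext A (m-2) = false ∧ ext A (m-1) = true ∧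
  ∀ k < M + 1, 2 ≤ k → ¬ Bif A k

instance (m M : ℕ) (A : Fin m → Bool) : Decidable (Pred m M A) := by
  unfold Pred; infer_instance

def N (m M : ℕ) : ℕ := (Finset.univ.filter (fun A : Fin m → Bool => Pred m M A)).card

def G (M : ℕ) : ℕ := N (2*M) M

lemma ext_val {m : ℕ} (A : Fin m → Bool) (i : Fin m) : ext A (i : ℕ) = A i := by
  simp [ext, i.isLt]

lemma ext_lt {m : ℕ} (A : Fin m → Bool) (x : ℕ) (hx : x < m) :
    ext A x = A ⟨x, hx⟩ := dif_pos hx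

lemma ext_add {m : ℕ} (A : Fin m → Bool) (i j : Fin m) (h : (i:ℕ) + (j:ℕ) < m) :
    A (i + j) = ext A ((i:ℕ) + (j:ℕ)) := by
  rw [ext, dif_pos h]
  congr 1
  apply Fin.ext
  simp [Fin.val_add, Nat.mod_eq_of_lt h]

lemma conway_iff {m : ℕ} (hm : 4 ≤ m) (A : Fin m → Bool)
    (h0 : ext A 0 = true) (hl : ext A (m-1) = true) :
    conway A A = 2 ^ (m - 1) + 1 ↔ ∀ k < m, 2 ≤ k → ¬ Bif A k := by
  have hm0 : 0 < m := by omega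
  set f : Fin m → ℕ := fun i =>
    if (∀ j : Fin m, (i : ℕ) + (j : ℕ) < m → A (i + j) = A j) then 2 ^ (m - 1 - (i : ℕ)) else 0
    with hf
  have hcon : conway A A = ∑ i : Fin m, f i := rfl
  set i0 : Fin m := ⟨0, hm0⟩
  set il : Fin m := ⟨m-1, by omega⟩
  have hne : il ≠ i0 := by
    simp only [Fin.ne_iff_vne, i0, il]; omega
  have hmem : il ∈ (univ : Finset (Fin m)).erase i0 := mem_erase.2 ⟨hne, mem_univ _⟩
  have hf0 : f i0 = 2 ^ (m - 1) := by
    rw [hf]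
    simp only [i0]
    rw [if_pos]
    · norm_num
    · intro j hj
      have : i0 + j = j := by
        apply Fin.ext; simp [Fin.val_add, i0, Nat.mod_eq_of_lt j.isLt]
      rw [this]
  have hfl : f il = 1 := by
    rw [hf]
    simp only [il]
    rw [if_pos]
    · simp
    · intro j hj
      have hj0 : (j : ℕ) = 0 := by omega
      have h1 : il + j = il := by
        apply Fin.ext
        simp only [Fin.val_add, il, hj0, Nat.add_zero]
        exact Nat.mod_eq_of_lt (by omega)
      have h2 : j = i0 := by apply Fin.ext; simp [i0, hj0]
      rw [show ((⟨m-1, by omega⟩ : Fin m) + j) = il from h1, h2]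
      rw [← ext_val A il, ← ext_val A i0]
      simp only [il, i0]
      rw [h0, hl]
  have hsum : conway A A = 2 ^ (m-1) + (1 + ∑ i ∈ ((univ : Finset (Fin m)).erase i0).erase il, f i) := by
    rw [hcon, ← Finset.add_sum_erase _ f (mem_univ i0), ← Finset.add_sum_erase _ f hmem, hf0, hfl]
  rw [hsum]
  have key : (∑ i ∈ ((univ : Finset (Fin m)).erase i0).erase il, f i) = 0 ↔
      ∀ k < m, 2 ≤ k → ¬ Bif A k := by
    rw [Finset.sum_eq_zero_iff]
    constructor
    · intro h k hk hk2 hbif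
      set i : Fin m := ⟨m - k, by omega⟩
      have hi : i ∈ ((univ : Finset (Fin m)).erase i0).erase il := by
        simp only [mem_erase, mem_univ, and_true, Fin.ne_iff_vne, i, i0, il]
        omega
      have := h i hi
      rw [hf] at this
      simp only [ite_eq_right_iff] at this
      have hP : ∀ j : Fin m, (i : ℕ) + (j : ℕ) < m → A (i + j) = A j := by
        intro j hj
        rw [ext_add A i j hj, ← ext_val A j]
        have hjk : (j : ℕ) < k := by simp only [i] at hj ⊢; omega
        have := hbif (j : ℕ) hjk
        exact this
      have := this hP
      simp at this
    · intro h i hi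
      simp only [mem_erase, mem_univ, and_true, Fin.ne_iff_vne, i0, il] at hi
      rw [hf]
      simp only [ite_eq_right_iff]
      intro hP
      exfalso
      set k : ℕ := m - (i : ℕ)
      have hk : k < m := by have := i.isLt; omega
      have hk2 : 2 ≤ k := by have := i.isLt; omega
      refine h k hk hk2 ?_
      intro j hjk
      have hjm : j < m := by omega
      set jf : Fin m := ⟨j, hjm⟩
      have hlt : (i : ℕ) + (jf : ℕ) < m := by simp only [jf]; omega
      have := hP jf hlt
      rw [ext_add A i jf hlt, ← ext_val A jf] at this
      have hjv : (jf:ℕ) = j := rfl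
      rw [show m - k + j = (i:ℕ) + (jf:ℕ) by rw [hjv]; simp only [k]; have := i.isLt; omega]
      exact this
  rw [← key]
  omega

lemma forall_val_eq {m : ℕ} (A : Fin m → Bool) (t : ℕ) (ht : t < m) (b : Bool) :
    (∀ i : Fin m, (i:ℕ) = t → A i = b) ↔ ext A t = b := by
  constructor
  · intro h
    rw [ext, dif_pos ht]
    exact h _ rfl
  · intro h i hi
    have : i = ⟨t, ht⟩ := Fin.ext hi
    rw [this]
    rw [ext, dif_pos ht] at h
    exact h

lemma cstar_eq {m : ℕ} (hm : 4 ≤ m) : cstar m = N m (m-1) := by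
  rw [cstar, N]
  rw [Fintype.card_subtype]
  congr 1
  apply Finset.filter_congr
  intro A _
  simp only [Pred]
  rw [forall_val_eq A 0 (by omega), forall_val_eq A 1 (by omega),
    forall_val_eq A (m-2) (by omega), forall_val_eq A (m-1) (by omega)]
  constructor
  · rintro ⟨p0, p1, p2, p3, pc⟩
    refine ⟨p0, p1, p2, p3, ?_⟩
    intro k hk hk2
    exact (conway_iff hm A p0 p3).1 pc k (by omega) hk2
  · rintro ⟨p0, p1, p2, p3, pb⟩
    refine ⟨p0, p1, p2, p3, ?_⟩
    rw [conway_iff hm A p0 p3]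
    intro k hk hk2
    exact pb k (by omega) hk2

def rmap (m M : ℕ) (A : Fin m → Bool) : Fin (2*M) → Bool :=
  fun i => if (i:ℕ) < M then ext A (i:ℕ) else ext A ((i:ℕ) + (m - 2*M))

def midmap (m M : ℕ) (A : Fin m → Bool) : Fin (m - 2*M) → Bool :=
  fun j => ext A (M + (j:ℕ))

def glue (m M : ℕ) (B : Fin (2*M) → Bool) (C : Fin (m - 2*M) → Bool) : Fin m → Bool :=
  fun i => if (i:ℕ) < M then ext B (i:ℕ) else if (i:ℕ) < m - M then ext C ((i:ℕ) - M)
    else ext B ((i:ℕ) - (m - 2*M))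

lemma ext_rmap {m M : ℕ} (A : Fin m → Bool) (x : ℕ) (hx : x < 2*M) :
    ext (rmap m M A) x = if x < M then ext A x else ext A (x + (m - 2*M)) := by
  rw [ext_lt _ x hx]
  rfl

lemma ext_midmap {m M : ℕ} (A : Fin m → Bool) (x : ℕ) (hx : x < m - 2*M) :
    ext (midmap m M A) x = ext A (M + x) := by
  rw [ext_lt _ x hx]
  rfl

lemma ext_glue {m M : ℕ} (B : Fin (2*M) → Bool) (C : Fin (m - 2*M) → Bool) (x : ℕ) (hx : x < m) :
    ext (glue m M B C) x = if x < M then ext B x else if x < m - M then ext C (x - M)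
      else ext B (x - (m - 2*M)) := by
  rw [ext_lt _ x hx]
  rfl

lemma bif_rmap {m M k : ℕ} (A : Fin m → Bool) (hm : 2*M ≤ m) (hk : k ≤ M) (hk1 : 1 ≤ k) :
    Bif A k ↔ Bif (rmap m M A) k := by
  unfold Bif
  refine forall_congr' fun j => imp_congr_right fun hj => ?_
  have e1 : ext (rmap m M A) (2*M - k + j) = ext A (m - k + j) := by
    rw [ext_rmap A _ (by omega), if_neg (by omega)]
    congr 1
    omega
  have e2 : ext (rmap m M A) j = ext A j := by
    rw [ext_rmap A _ (by omega), if_pos (by omega)]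
  rw [e1, e2]

lemma pred_rmap {m M : ℕ} (A : Fin m → Bool) (hM : 2 ≤ M) (hm : 2*M ≤ m) :
    Pred m M A ↔ Pred (2*M) M (rmap m M A) := by
  unfold Pred
  have e0 : ext (rmap m M A) 0 = ext A 0 := by
    rw [ext_rmap A _ (by omega), if_pos (by omega)]
  have e1 : ext (rmap m M A) 1 = ext A 1 := by
    rw [ext_rmap A _ (by omega), if_pos (by omega)]
  have e2 : ext (rmap m M A) (2*M - 2) = ext A (m - 2) := by
    rw [ext_rmap A _ (by omega), if_neg (by omega)]
    congr 1
    omega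
  have e3 : ext (rmap m M A) (2*M - 1) = ext A (m - 1) := by
    rw [ext_rmap A _ (by omega), if_neg (by omega)]
    congr 1
    omega
  rw [e0, e1, e2, e3]
  refine and_congr_right fun _ => and_congr_right fun _ => and_congr_right fun _ =>
    and_congr_right fun _ => ?_
  refine forall_congr' fun k => imp_congr_right fun hk => imp_congr_right fun hk2 => ?_
  rw [bif_rmap A hm (by omega) (by omega)]

lemma glue_rmap {m M : ℕ} (A : Fin m → Bool) (hM : 1 ≤ M) (hm : 2*M ≤ m) :
    glue m M (rmap m M A) (midmap m M A) = A := by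
  funext i
  have hi := i.isLt
  show (if (i:ℕ) < M then _ else _) = _
  split_ifs with c1 c2
  · rw [ext_rmap A _ (by omega), if_pos c1, ← ext_lt A _ hi]
  · rw [ext_midmap A _ (by omega), show M + ((i:ℕ) - M) = (i:ℕ) by omega, ← ext_lt A _ hi]
  · rw [ext_rmap A _ (by omega), if_neg (by omega),
      show (i:ℕ) - (m - 2*M) + (m - 2*M) = (i:ℕ) by omega, ← ext_lt A _ hi]

lemma rmap_glue {m M : ℕ} (B : Fin (2*M) → Bool) (C : Fin (m - 2*M) → Bool) (hm : 2*M ≤ m) :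
    rmap m M (glue m M B C) = B := by
  funext i
  have hi := i.isLt
  show (if (i:ℕ) < M then _ else _) = _
  split_ifs with c1
  · rw [ext_glue B C _ (by omega), if_pos c1, ← ext_lt B _ hi]
  · rw [ext_glue B C _ (by omega), if_neg (by omega), if_neg (by omega),
      show (i:ℕ) + (m - 2*M) - (m - 2*M) = (i:ℕ) by omega, ← ext_lt B _ hi]

lemma midmap_glue {m M : ℕ} (B : Fin (2*M) → Bool) (C : Fin (m - 2*M) → Bool) (hm : 2*M ≤ m) :
    midmap m M (glue m M B C) = C := by
  funext j
  have hj := j.isLt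
  show ext (glue m M B C) (M + (j:ℕ)) = _
  rw [ext_glue B C _ (by omega), if_neg (by omega), if_pos (by omega),
    show M + (j:ℕ) - M = (j:ℕ) by omega, ← ext_lt C _ hj]

lemma count_eq {m M : ℕ} (hM : 2 ≤ M) (hm : 2*M ≤ m) : N m M = G M * 2^(m - 2*M) := by
  have hcard : G M * 2^(m - 2*M) =
      ((Finset.univ.filter (fun B : Fin (2*M) → Bool => Pred (2*M) M B)) ×ˢ
        (Finset.univ : Finset (Fin (m - 2*M) → Bool))).card := by
    rw [Finset.card_product, Finset.card_univ, G, N]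
    congr 1
    rw [Fintype.card_fun]
    simp
  rw [hcard, N]
  apply Finset.card_bij' (fun A _ => (rmap m M A, midmap m M A))
    (fun p _ => glue m M p.1 p.2)
  · intro A hA
    simp only [Finset.mem_filter, Finset.mem_univ, true_and] at hA ⊢
    rw [Finset.mem_product]
    refine ⟨?_, Finset.mem_univ _⟩
    simp only [Finset.mem_filter, Finset.mem_univ, true_and]
    exact (pred_rmap A hM hm).1 hA
  · intro p hp
    simp only [Finset.mem_product, Finset.mem_filter, Finset.mem_univ, true_and] at hp
    simp only [Finset.mem_filter, Finset.mem_univ, true_and]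
    rw [pred_rmap _ hM hm, rmap_glue _ _ hm]
    exact hp.1
  · intro A hA
    exact glue_rmap A (by omega) hm
  · intro p hp
    exact Prod.ext (rmap_glue _ _ hm) (midmap_glue _ _ hm)

lemma ext_eq_of_forall {m : ℕ} {A1 A2 : Fin m → Bool}
    (h : ∀ i < m, ext A1 i = ext A2 i) : A1 = A2 := by
  funext i
  have := h (i:ℕ) i.isLt
  rwa [ext_lt _ _ i.isLt, ext_lt _ _ i.isLt] at this

/-- strings with a bifix of length `k` are determined by their first `m - k` bits -/
lemma card_bif_le {m k : ℕ} (hk : k ≤ m) (hk1 : 1 ≤ m - k) :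
    (Finset.univ.filter (fun A : Fin m → Bool => Bif A k)).card ≤ 2^(m - k) := by
  have : (2:ℕ)^(m-k) = (Finset.univ : Finset (Fin (m-k) → Bool)).card := by
    rw [Finset.card_univ, Fintype.card_fun]
    simp
  rw [this]
  apply Finset.card_le_card_of_injOn (fun A => fun j : Fin (m-k) => ext A (j:ℕ))
    (fun _ _ => Finset.mem_univ _)
  intro A1 h1 A2 h2 heq
  simp only [Finset.mem_coe, Finset.mem_filter] at h1 h2
  apply ext_eq_of_forall
  intro i
  induction i using Nat.strong_induction_on with
  | _ i IH =>
    intro him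
    by_cases hc : i < m - k
    · have := congrFun heq ⟨i, hc⟩
      simpa using this
    · have j := i - (m - k)
      have hjk : i - (m - k) < k := by omega
      have e1 := h1.2 (i - (m-k)) hjk
      have e2 := h2.2 (i - (m-k)) hjk
      rw [show m - k + (i - (m-k)) = i by omega] at e1 e2
      rw [e1, e2]
      exact IH (i - (m-k)) (by omega) (by omega)

/-- strings of length `2M+2` with fixed first two bits and a bifix of length `M+1`
are determined by `M - 1` bits -/
lemma card_predbif_le {M : ℕ} (hM : 1 ≤ M) :
    (Finset.univ.filter (fun A : Fin (2*M+2) → Bool =>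
      ext A 0 = true ∧ ext A 1 = false ∧ Bif A (M+1))).card ≤ 2^(M-1) := by
  have : (2:ℕ)^(M-1) = (Finset.univ : Finset (Fin (M-1) → Bool)).card := by
    rw [Finset.card_univ, Fintype.card_fun]
    simp
  rw [this]
  apply Finset.card_le_card_of_injOn (fun A => fun j : Fin (M-1) => ext A ((j:ℕ)+2))
    (fun _ _ => Finset.mem_univ _)
  intro A1 h1 A2 h2 heq
  simp only [Finset.mem_coe, Finset.mem_filter] at h1 h2
  obtain ⟨-, e10, e11, hb1⟩ := h1
  obtain ⟨-, e20, e21, hb2⟩ := h2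
  have low : ∀ i ≤ M, ext A1 i = ext A2 i := by
    intro i hi
    by_cases c0 : i = 0
    · rw [c0, e10, e20]
    by_cases c1 : i = 1
    · rw [c1, e11, e21]
    have hc : i - 2 < M - 1 := by omega
    have := congrFun heq ⟨i - 2, hc⟩
    simp only at this
    rwa [show (i:ℕ) - 2 + 2 = i by omega] at this
  apply ext_eq_of_forall
  intro i him
  by_cases hc : i ≤ M
  · exact low i hc
  · have hjk : i - (M+1) < M + 1 := by omega
    have e1 := hb1 (i - (M+1)) hjk
    have e2 := hb2 (i - (M+1)) hjk
    rw [show 2*M+2 - (M+1) + (i - (M+1)) = i by omega] at e1 e2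
    rw [e1, e2]
    exact low _ (by omega)

lemma pred_mono {m M M' : ℕ} (h : M ≤ M') {A : Fin m → Bool} (hA : Pred m M' A) :
    Pred m M A := by
  obtain ⟨p0, p1, p2, p3, pb⟩ := hA
  exact ⟨p0, p1, p2, p3, fun k hk hk2 => pb k (by omega) hk2⟩

lemma N_anti {m M M' : ℕ} (h : M ≤ M') : N m M' ≤ N m M := by
  apply Finset.card_le_card
  intro A hA
  simp only [Finset.mem_filter, Finset.mem_univ, true_and] at hA ⊢
  exact pred_mono h hA

lemma sum_two_pow (n : ℕ) : ∑ i ∈ Finset.range n, 2^i = 2^n - 1 := by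
  induction n with
  | zero => simp
  | succ n ih =>
    rw [Finset.sum_range_succ, ih]
    have : 1 ≤ 2^n := Nat.one_le_two_pow
    omega

lemma sum_pow_le {m M : ℕ} (hM : M ≤ m) :
    ∑ k ∈ Finset.Icc (M+1) (m-1), 2^(m-k) ≤ 2^(m-M) := by
  have hsub : ∀ k ∈ Finset.Icc (M+1) (m-1), 2^(m-k) ≤ 2^(m-k) := fun _ _ => le_rfl
  calc ∑ k ∈ Finset.Icc (M+1) (m-1), 2^(m-k)
      = ∑ j ∈ Finset.Icc 1 (m-1-M), 2^j := by
        apply Finset.sum_nbij' (fun k => m - k) (fun j => m - j)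
        · intro k hk
          simp only [Finset.mem_Icc] at hk ⊢
          omega
        · intro j hj
          simp only [Finset.mem_Icc] at hj ⊢
          omega
        · intro k hk
          simp only [Finset.mem_Icc] at hk
          omega
        · intro j hj
          simp only [Finset.mem_Icc] at hj
          omega
        · intro k hk
          rfl
    _ ≤ ∑ j ∈ Finset.range (m-M), 2^j := by
        apply Finset.sum_le_sum_of_subset
        intro j hj
        simp only [Finset.mem_Icc] at hj
        simp only [Finset.mem_range]
        omega
    _ ≤ 2^(m-M) := by rw [sum_two_pow]; exact Nat.sub_le _ _

/-- the union bound: relaxing the bifix constraint overcounts by at most `∑ 2^{m-k}`. -/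
lemma N_le {m M M' : ℕ} (hMM : M ≤ M') (hM' : M' ≤ m - 1) (hM : 2 ≤ M) (hm : 4 ≤ m) :
    N m M ≤ N m M' + 2^(m-M) := by
  have hsub : (Finset.univ.filter (fun A : Fin m → Bool => Pred m M A)) ⊆
      (Finset.univ.filter (fun A : Fin m → Bool => Pred m M' A)) ∪
      (Finset.Icc (M+1) M').biUnion (fun k =>
        Finset.univ.filter (fun A : Fin m → Bool => Bif A k)) := by
    intro A hA
    simp only [Finset.mem_filter, Finset.mem_univ, true_and] at hA
    by_cases hP : Pred m M' A
    · exact Finset.mem_union_left _ (by simp [hP])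
    · apply Finset.mem_union_right
      obtain ⟨p0, p1, p2, p3, pb⟩ := hA
      have : ∃ k, k < M' + 1 ∧ 2 ≤ k ∧ Bif A k := by
        by_contra hcon
        push_neg at hcon
        exact hP ⟨p0, p1, p2, p3, fun k hk hk2 => hcon k hk hk2⟩
      obtain ⟨k, hk, hk2, hbk⟩ := this
      have hkM : M + 1 ≤ k := by
        by_contra hcon
        exact (pb k (by omega) hk2) hbk
      rw [Finset.mem_biUnion]
      exact ⟨k, Finset.mem_Icc.2 ⟨hkM, by omega⟩, by simp [hbk]⟩
  calc N m M ≤ _ := Finset.card_le_card hsub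
    _ ≤ N m M' + ((Finset.Icc (M+1) M').biUnion (fun k =>
        Finset.univ.filter (fun A : Fin m → Bool => Bif A k))).card := Finset.card_union_le _ _
    _ ≤ N m M' + ∑ k ∈ Finset.Icc (M+1) M', 2^(m-k) := by
        gcongr
        calc _ ≤ _ := Finset.card_biUnion_le
          _ ≤ _ := Finset.sum_le_sum (fun k hk => by
              simp only [Finset.mem_Icc] at hk
              exact card_bif_le (by omega) (by omega))
    _ ≤ N m M' + 2^(m-M) := by
        gcongr
        calc ∑ k ∈ Finset.Icc (M+1) M', 2^(m-k)
            ≤ ∑ k ∈ Finset.Icc (M+1) (m-1), 2^(m-k) := by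
              apply Finset.sum_le_sum_of_subset
              apply Finset.Icc_subset_Icc_right
              omega
          _ ≤ 2^(m-M) := sum_pow_le (by omega)

lemma G_succ_le {M : ℕ} (hM : 2 ≤ M) : G (M+1) ≤ 4 * G M := by
  have h1 : G (M+1) = N (2*M+2) (M+1) := by
    rw [G, show 2*(M+1) = 2*M+2 by ring]
  have h2 : N (2*M+2) M = G M * 4 := by
    rw [count_eq hM (by omega), show 2*M+2 - 2*M = 2 by omega]; norm_num
  rw [h1]
  calc N (2*M+2) (M+1) ≤ N (2*M+2) M := N_anti (by omega)
    _ = 4 * G M := by rw [h2]; ring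

lemma G_succ_ge {M : ℕ} (hM : 2 ≤ M) : 4 * G M ≤ G (M+1) + 2^(M-1) := by
  have h1 : G (M+1) = N (2*M+2) (M+1) := by
    rw [G, show 2*(M+1) = 2*M+2 by ring]
  have h2 : N (2*M+2) M = G M * 4 := by
    rw [count_eq hM (by omega), show 2*M+2 - 2*M = 2 by omega]; norm_num
  have hsub : (Finset.univ.filter (fun A : Fin (2*M+2) → Bool => Pred (2*M+2) M A)) ⊆
      (Finset.univ.filter (fun A : Fin (2*M+2) → Bool => Pred (2*M+2) (M+1) A)) ∪
      (Finset.univ.filter (fun A : Fin (2*M+2) → Bool =>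
        ext A 0 = true ∧ ext A 1 = false ∧ Bif A (M+1))) := by
    intro A hA
    simp only [Finset.mem_filter, Finset.mem_univ, true_and] at hA
    obtain ⟨p0, p1, p2, p3, pb⟩ := hA
    by_cases hb : Bif A (M+1)
    · exact Finset.mem_union_right _ (by simp [p0, p1, hb])
    · apply Finset.mem_union_left
      simp only [Finset.mem_filter, Finset.mem_univ, true_and]
      refine ⟨p0, p1, p2, p3, ?_⟩
      intro k hk hk2
      by_cases hkM : k = M + 1
      · rwa [hkM]
      · exact pb k (by omega) hk2
  have := Finset.card_le_card hsub
  have hu := Finset.card_union_le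
    (Finset.univ.filter (fun A : Fin (2*M+2) → Bool => Pred (2*M+2) (M+1) A))
    (Finset.univ.filter (fun A : Fin (2*M+2) → Bool =>
      ext A 0 = true ∧ ext A 1 = false ∧ Bif A (M+1)))
  have hc := card_predbif_le (M := M) (by omega)
  have : N (2*M+2) M ≤ N (2*M+2) (M+1) + 2^(M-1) := by
    unfold N at *
    omega
  omega

lemma G2 : G 2 = 1 := by decide
lemma G3 : G 3 = 3 := by decide

noncomputable def hR (M : ℕ) : ℝ := (G M : ℝ) / 2^(2*M)

lemma hR_nonneg (M : ℕ) : 0 ≤ hR M := by rw [hR]; positivity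

lemma hR_succ_le {M : ℕ} (hM : 2 ≤ M) : hR (M+1) ≤ hR M := by
  have h := G_succ_le hM
  rw [hR, hR, div_le_div_iff₀ (by positivity) (by positivity)]
  have e : (2:ℝ)^(2*(M+1)) = 2^(2*M) * 4 := by
    rw [show 2*(M+1) = 2*M + 2 by ring, pow_add]; norm_num
  rw [e, ← mul_assoc]
  have : (G (M+1) : ℝ) ≤ 4 * (G M : ℝ) := by exact_mod_cast h
  nlinarith [pow_pos (show (0:ℝ) < 2 by norm_num) (2*M)]

lemma hR_succ_ge {M : ℕ} (hM : 2 ≤ M) : hR M ≤ hR (M+1) + (1/2:ℝ)^M / 8 := by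
  have h := G_succ_ge hM
  have hc : (4:ℝ) * (G M : ℝ) ≤ (G (M+1) : ℝ) + 2^(M-1) := by exact_mod_cast h
  have e1 : hR M = (4 * (G M : ℝ)) / 2^(2*(M+1)) := by
    rw [hR, show 2*(M+1) = 2*M + 2 by ring, pow_add]
    field_simp
    ring
  have e2 : (2:ℝ)^(M-1) / 2^(2*(M+1)) = (1/2:ℝ)^M / 8 := by
    rw [div_eq_div_iff (by positivity) (by norm_num), div_pow, one_pow]
    rw [div_mul_eq_mul_div, eq_div_iff (by positivity)]
    rw [show (8:ℝ) = 2^3 by norm_num, ← pow_add, ← pow_add, one_mul]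
    congr 1
    omega
  rw [e1, hR, ← e2]
  rw [← add_div, show (2:ℝ)^(2*(M+1)) = 2^(2*M)*4 by rw [show 2*(M+1) = 2*M+2 by ring, pow_add]; norm_num]
  rw [div_le_div_iff₀ (by positivity) (by positivity)]
  have e3 : (G (M+1):ℝ) / (2^(2*M)*4) = (G (M+1) : ℝ)/2^(2*(M+1)) := by
    rw [show 2*(M+1) = 2*M+2 by ring, pow_add]; norm_num
  nlinarith [pow_pos (show (0:ℝ) < 2 by norm_num) (2*M), pow_pos (show (0:ℝ) < (1/2:ℝ) by norm_num) M, pow_pos (show (0:ℝ) < 2 by norm_num) (M-1)]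

noncomputable def seq (k : ℕ) : ℝ := hR (k+2)

lemma seq_anti : Antitone seq := by
  apply antitone_nat_of_succ_le
  intro k
  exact hR_succ_le (by omega)

lemma seq_bdd : BddBelow (Set.range seq) := by
  refine ⟨0, ?_⟩
  rintro x ⟨k, rfl⟩
  exact hR_nonneg _

noncomputable def alpha : ℝ := ⨅ k, seq k

open Filter in
lemma seq_tendsto : Tendsto seq atTop (nhds alpha) :=
  tendsto_atTop_ciInf seq_anti seq_bdd

lemma alpha_le_seq (k : ℕ) : alpha ≤ seq k := ciInf_le seq_bdd k

lemma seq_le_add (k t : ℕ) :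
    seq k ≤ seq (k+t) + ((1/2:ℝ)^(k+2)/8) * ∑ j ∈ Finset.range t, (1/2:ℝ)^j := by
  induction t with
  | zero => simp
  | succ t ih =>
    have h1 : seq (k+t) ≤ seq (k+t+1) + (1/2:ℝ)^(k+t+2)/8 := by
      have := hR_succ_ge (M := k+t+2) (by omega)
      simpa [seq, show k+t+2+1 = k+(t+1)+2 by ring, show k+t+1+2 = k+(t+1)+2 by ring] using this
    have e : (1/2:ℝ)^(k+t+2)/8 = ((1/2:ℝ)^(k+2)/8) * (1/2:ℝ)^t := by
      rw [show k+t+2 = (k+2)+t by ring, pow_add]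
      ring
    calc seq k ≤ seq (k+t) + ((1/2:ℝ)^(k+2)/8) * ∑ j ∈ Finset.range t, (1/2:ℝ)^j := ih
      _ ≤ (seq (k+t+1) + (1/2:ℝ)^(k+t+2)/8) + ((1/2:ℝ)^(k+2)/8) * ∑ j ∈ Finset.range t, (1/2:ℝ)^j := by
          gcongr
      _ = seq (k+(t+1)) + ((1/2:ℝ)^(k+2)/8) * (∑ j ∈ Finset.range t, (1/2:ℝ)^j + (1/2:ℝ)^t) := by
          rw [e, show k+(t+1) = k+t+1 by ring]
          ring
      _ = _ := by rw [Finset.sum_range_succ]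

lemma seq_le_alpha_add (k : ℕ) : seq k ≤ alpha + (1/2:ℝ)^(k+2)/4 := by
  have key : ∀ t, seq k ≤ seq (k+t) + (1/2:ℝ)^(k+2)/4 := by
    intro t
    calc seq k ≤ seq (k+t) + ((1/2:ℝ)^(k+2)/8) * ∑ j ∈ Finset.range t, (1/2:ℝ)^j :=
          seq_le_add k t
      _ ≤ seq (k+t) + ((1/2:ℝ)^(k+2)/8) * 2 := by
          have hs := sum_geometric_two_le t
          have hnn : (0:ℝ) ≤ (1/2:ℝ)^(k+2)/8 := by positivity
          nlinarith
      _ = seq (k+t) + (1/2:ℝ)^(k+2)/4 := by ring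
  have key' : ∀ t, seq k ≤ seq (t+k) + (1/2:ℝ)^(k+2)/4 := fun t => by
    rw [add_comm t k]; exact key t
  have htend : Filter.Tendsto (fun t => seq (t+k) + (1/2:ℝ)^(k+2)/4) Filter.atTop
      (nhds (alpha + (1/2:ℝ)^(k+2)/4)) :=
    (seq_tendsto.comp (Filter.tendsto_add_atTop_nat k)).add_const _
  exact le_of_tendsto_of_tendsto' tendsto_const_nhds htend key'

lemma hR_le_alpha_add {M : ℕ} (hM : 2 ≤ M) : hR M ≤ alpha + (1/2:ℝ)^M/4 := by
  have := seq_le_alpha_add (M-2)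
  rwa [seq, show M-2+2 = M by omega] at this

lemma alpha_le_hR {M : ℕ} (hM : 2 ≤ M) : alpha ≤ hR M := by
  have := alpha_le_seq (M-2)
  rwa [seq, show M-2+2 = M by omega] at this

lemma alpha_pos : 0 < alpha := by
  have h1 : hR 3 = 3/64 := by
    rw [hR, G3]
    norm_num
  have h2 := hR_le_alpha_add (M := 3) (by omega)
  rw [h1] at h2
  norm_num at h2
  linarith

lemma main_bound {n : ℕ} (hn : 5 ≤ n) :
    |(c n : ℝ) / 2 ^ n - alpha| ≤ 2 * (2 : ℝ) ^ (-(n : ℝ) / 2) := by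
  set m := n - 1 with hm
  have hm4 : 4 ≤ m := by omega
  set M := m / 2 with hMdef
  have hM2 : 2 ≤ M := by omega
  have h2M : 2*M ≤ m := by omega
  have hMm : M ≤ m - 1 := by omega
  -- c n / 2^n = cstar m / 2^m
  have hc : (c n : ℝ) / 2 ^ n = (cstar m : ℝ) / 2 ^ m := by
    rw [c, show n = m + 1 by omega]
    push_cast
    rw [pow_succ]
    ring
  -- counting facts
  have h1 : cstar m ≤ N m M := by
    rw [cstar_eq hm4]; exact N_anti hMm
  have h2 : N m M ≤ cstar m + 2^(m-M) := by
    rw [cstar_eq hm4]; exact N_le hMm le_rfl hM2 hm4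
  -- N m M / 2^m = hR M
  have hpow : (2:ℝ)^m = 2^(2*M) * 2^(m-2*M) := by
    rw [← pow_add]; congr 1; omega
  have hNM : (N m M : ℝ) / 2^m = hR M := by
    rw [count_eq hM2 h2M, hR, hpow]
    push_cast
    rw [mul_comm ((2:ℝ)^(2*M)) _, mul_comm ((G M : ℝ)) _,
      mul_div_mul_left _ _ (by positivity : ((2:ℝ)^(m-2*M)) ≠ 0)]
  have hpow2 : (2:ℝ)^m = 2^M * 2^(m-M) := by
    rw [← pow_add]; congr 1; omega
  have hhalf : ((2:ℕ)^(m-M) : ℝ) / 2^m = (1/2:ℝ)^M := by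
    push_cast
    rw [hpow2, div_pow, one_pow]
    rw [div_eq_div_iff (by positivity) (by positivity)]
    ring
  set dd : ℝ := (cstar m : ℝ) / 2 ^ m with hdd
  have hd1 : dd ≤ hR M := by
    rw [← hNM, hdd]
    apply div_le_div_of_nonneg_right ?_ (by positivity)
    · exact_mod_cast h1
  have hd2 : hR M ≤ dd + (1/2:ℝ)^M := by
    rw [← hNM, ← hhalf, hdd, ← add_div]
    apply div_le_div_of_nonneg_right ?_ (by positivity)
    · exact_mod_cast h2
  have ha1 := alpha_le_hR hM2
  have ha2 := hR_le_alpha_add hM2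
  have habs : |dd - alpha| ≤ (1/2:ℝ)^M := by
    rw [abs_le]
    constructor <;> [linarith; linarith]
  -- (1/2)^M ≤ 2 * 2^(-n/2)
  have hMn : (n:ℝ) - 2 ≤ 2*(M:ℝ) := by
    have h' : n ≤ 2*M + 2 := by omega
    have h'' : (n:ℝ) ≤ 2*(M:ℝ) + 2 := by exact_mod_cast h'
    linarith
  have hfin : ((1:ℝ)/2)^M ≤ 2 * (2:ℝ) ^ (-(n:ℝ)/2) := by
    have e1 : ((1:ℝ)/2)^M = (2:ℝ) ^ (-(M:ℝ)) := by
      rw [Real.rpow_neg (by norm_num), Real.rpow_natCast, ← inv_pow, one_div]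
    have e2 : 2 * (2:ℝ) ^ (-(n:ℝ)/2) = (2:ℝ) ^ ((1:ℝ) + -(n:ℝ)/2) := by
      rw [Real.rpow_add (by norm_num), Real.rpow_one]
    rw [e1, e2]
    apply Real.rpow_le_rpow_of_exponent_le (by norm_num)
    linarith
  rw [hc]
  linarith [habs, hfin]
end DnAux

open Filter in
/-- The sequence `d_n = c_n / 2^n` converges to a strictly positive limit `α`, and
`|d_n - α| ≤ K · 2^{-n/2}` for all `n ≥ 5`, for some constant `K > 0`. -/
theorem dn_convergence :
    ∃ α : ℝ, 0 < α ∧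
      Tendsto (fun n : ℕ => (c n : ℝ) / 2 ^ n) atTop (nhds α) ∧
      ∃ K : ℝ, 0 < K ∧ ∀ n : ℕ, 5 ≤ n →
        |(c n : ℝ) / 2 ^ n - α| ≤ K * (2 : ℝ) ^ (-(n : ℝ) / 2) := by
  refine ⟨DnAux.alpha, DnAux.alpha_pos, ?_, 2, by norm_num,
    fun n hn => DnAux.main_bound hn⟩
  rw [← tendsto_sub_nhds_zero_iff]
  refine squeeze_zero_norm' (a := fun n : ℕ => 2 * (2:ℝ) ^ (-(n:ℝ)/2)) ?_ ?_
  · filter_upwards [eventually_ge_atTop 5] with n hn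
    rw [Real.norm_eq_abs]
    exact DnAux.main_bound hn
  · have hlt : (2:ℝ) ^ (-(1:ℝ)/2) < 1 :=
      Real.rpow_lt_one_of_one_lt_of_neg one_lt_two (by norm_num)
    have hge : (0:ℝ) ≤ (2:ℝ) ^ (-(1:ℝ)/2) := Real.rpow_nonneg (by norm_num) _
    have h0 : Tendsto (fun n : ℕ => ((2:ℝ) ^ (-(1:ℝ)/2))^n) atTop (nhds 0) :=
      tendsto_pow_atTop_nhds_zero_of_lt_one hge hlt
    have heq : ∀ n : ℕ, ((2:ℝ) ^ (-(1:ℝ)/2))^n = (2:ℝ) ^ (-(n:ℝ)/2) := by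
      intro n
      rw [← Real.rpow_natCast ((2:ℝ) ^ (-(1:ℝ)/2)) n, ← Real.rpow_mul (by norm_num)]
      ring_nf
    have := h0.const_mul (2:ℝ)
    rw [mul_zero] at this
    apply this.congr
    intro n
    rw [heq]
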